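/- arXiv:1106.4255 — 2 statements merged into one kernel-verified Lean document; each statement's English description precedes it below -/
import Mathlib

section
/- Let p be a prime and G ⊆ GL₂(𝔽_p) a subgroup containing the group U = { [[1,b],[0,1]] : b ∈ 𝔽_p } of upper unitriangular matrices, and let V = 𝔽_p² with the natural G-action. If H¹(G,V) ≠ 0, then every g ∈ G that normalizes U (i.e. gUg⁻¹ = U) is upper triangular (its (2,1)-entry is 0) and its diagonal entries satisfy g₁₁ = (g₂₂)². -/
/-- Vanishing of the first group cohomology `H¹(G, V)` of a representation `ρ`, expressed via
inhomogeneous `1`-cocycles: every `1`-cocycle is a `1`-coboundary. -/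
def H1Trivial {k G V : Type*} [CommRing k] [Group G] [AddCommGroup V] [Module k V]
    (ρ : Representation k G V) : Prop :=
  ∀ f : G → V, (∀ g h : G, f (g * h) = f g + ρ g (f h)) →
    ∃ v : V, ∀ g : G, f g = ρ g v - v

/-- The natural representation of a subgroup `G ⊆ GL₂(𝔽_p)` on `V = 𝔽_p²`. -/
noncomputable def glRep (p : ℕ) [Fact p.Prime] (G : Subgroup (GL (Fin 2) (ZMod p))) :
    Representation (ZMod p) G (Fin 2 → ZMod p) where
  toFun g := Matrix.mulVecLin ((g : GL (Fin 2) (ZMod p)) : Matrix (Fin 2) (Fin 2) (ZMod p))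
  map_one' := by simp; rfl
  map_mul' g h := by
    ext v
    simp [Matrix.mulVecLin_mul]

/-- The set `U = { [[1,b],[0,1]] : b ∈ 𝔽_p } ⊆ GL₂(𝔽_p)` of upper unitriangular matrices. -/
def uniSet (p : ℕ) [Fact p.Prime] : Set (GL (Fin 2) (ZMod p)) :=
  {u | ∃ b : ZMod p,
    ((u : GL (Fin 2) (ZMod p)) : Matrix (Fin 2) (Fin 2) (ZMod p)) = !![1, b; 0, 1]}

open Matrix in
private lemma mulVec_two' {α : Type*} [CommRing α] (a b c d : α) (v : Fin 2 → α) :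
    (!![a, b; c, d]).mulVec v = ![a * v 0 + b * v 1, c * v 0 + d * v 1] := by
  funext i
  fin_cases i <;> simp [Matrix.mulVec, dotProduct, Fin.sum_univ_two, vecHead, vecTail]

/-- The standard unipotent element `[[1,1],[0,1]]` of `GL₂(𝔽_p)`. -/
def sigmaGL (p : ℕ) [Fact p.Prime] : GL (Fin 2) (ZMod p) :=
  ⟨!![1, 1; 0, 1], !![1, -1; 0, 1],
    by rw [Matrix.mul_fin_two, Matrix.one_fin_two]; norm_num,
    by rw [Matrix.mul_fin_two, Matrix.one_fin_two]; norm_num⟩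

set_option maxHeartbeats 1000000 in
set_option synthInstance.maxHeartbeats 400000 in
theorem normalizer_shape_of_H1_ne_zero' (p : ℕ) [Fact p.Prime]
    (G : Subgroup (GL (Fin 2) (ZMod p)))
    (hU : uniSet p ⊆ (G : Set (GL (Fin 2) (ZMod p))))
    (h1 : ¬ H1Trivial (glRep p G)) :
    ∀ g ∈ G, ((fun u => g * u * g⁻¹) '' uniSet p = uniSet p) →
      ((g : Matrix (Fin 2) (Fin 2) (ZMod p)) 1 0 = 0 ∧
        (g : Matrix (Fin 2) (Fin 2) (ZMod p)) 0 0 =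
          ((g : Matrix (Fin 2) (Fin 2) (ZMod p)) 1 1) ^ 2) := by
  classical
  haveI : NeZero p := ⟨(Fact.out (p := p.Prime)).pos.ne'⟩
  intro g hg hnorm
  have hσmem : sigmaGL p ∈ uniSet p := ⟨1, rfl⟩
  -- Step 1: the (1,0) entry of g vanishes.
  have hconj : g * sigmaGL p * g⁻¹ ∈ uniSet p := by
    rw [← hnorm]; exact ⟨sigmaGL p, hσmem, rfl⟩
  obtain ⟨b', hb'⟩ := hconj
  have hid : g * sigmaGL p = (g * sigmaGL p * g⁻¹) * g := by group
  have hmm : (g : Matrix (Fin 2) (Fin 2) (ZMod p)) * !![1, 1; 0, 1]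
      = !![1, b'; 0, 1] * (g : Matrix (Fin 2) (Fin 2) (ZMod p)) := by
    have h2 := congrArg Units.val hid
    rw [Units.val_mul, Units.val_mul, hb'] at h2
    exact h2
  have hc : (g : Matrix (Fin 2) (Fin 2) (ZMod p)) 1 0 = 0 := by
    have h11 := congrFun (congrFun hmm 1) 1
    simp [Matrix.mul_apply, Fin.sum_univ_two] at h11
    linear_combination h11
  refine ⟨hc, ?_⟩
  by_contra hne
  apply h1
  intro f hf
  -- notation
  set a : ZMod p := (g : Matrix (Fin 2) (Fin 2) (ZMod p)) 0 0 with ha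
  set bb : ZMod p := (g : Matrix (Fin 2) (Fin 2) (ZMod p)) 0 1 with hbb
  set d : ZMod p := (g : Matrix (Fin 2) (Fin 2) (ZMod p)) 1 1 with hd'
  have hMeq : (g : Matrix (Fin 2) (Fin 2) (ZMod p)) = !![a, bb; 0, d] := by
    funext i j
    fin_cases i <;> fin_cases j <;> simp [ha, hbb, hd', hc]
  have hdet : IsUnit ((g : Matrix (Fin 2) (Fin 2) (ZMod p)).det) :=
    (Matrix.isUnit_iff_isUnit_det _).mp g.isUnit
  have hd : d ≠ 0 := by
    intro h0
    rw [hMeq, Matrix.det_fin_two_of, h0] at hdet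
    simp at hdet
  -- the unipotent generator, as an element of G
  set σ' : ↥G := (⟨sigmaGL p, hU hσmem⟩ : ↥G) with hσ'
  have hρ : ∀ (h : ↥G) (v : Fin 2 → ZMod p),
      glRep p G h v = ((h : GL (Fin 2) (ZMod p)) : Matrix (Fin 2) (Fin 2) (ZMod p)).mulVec v :=
    fun _ _ => rfl
  have hσpow : ∀ n : ℕ, (((σ' ^ n : ↥G) : GL (Fin 2) (ZMod p)) : Matrix (Fin 2) (Fin 2) (ZMod p))
      = !![1, (n : ZMod p); 0, 1] := by
    intro n
    induction n with
    | zero => simp [Matrix.one_fin_two]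
    | succ n ih =>
      rw [pow_succ, MulMemClass.coe_mul, Units.val_mul, ih]
      show _ * (!![1,1;0,1] : Matrix (Fin 2) (Fin 2) (ZMod p)) = _
      show (!![1, (n : ZMod p); 0, 1] : Matrix (Fin 2) (Fin 2) (ZMod p)) * !![1, 1; 0, 1] = _
      rw [Matrix.mul_fin_two]
      push_cast
      ring_nf
  have hσp : σ' ^ p = 1 := by
    apply Subtype.ext; apply Units.ext
    rw [hσpow p]
    simp [Matrix.one_fin_two, ZMod.natCast_self]
  have hσ1 : σ' ≠ 1 := by
    intro h
    have h2 := congrFun (congrFun (congrArg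
      (fun x : ↥G => ((x : GL (Fin 2) (ZMod p)) : Matrix (Fin 2) (Fin 2) (ZMod p))) h) 0) 1
    simp [hσ', sigmaGL, Matrix.one_fin_two] at h2
  have hf1 : f 1 = 0 := by
    have h2 := hf 1 1
    rw [mul_one, map_one] at h2
    simpa using h2
  set x : ZMod p := f σ' 0 with hx
  set y : ZMod p := f σ' 1 with hy'
  have hfσ : f σ' = ![x, y] := by
    funext i; fin_cases i <;> rfl
  have hfn1 : ∀ n : ℕ, f (σ' ^ n) 1 = n * y := by
    intro n
    induction n with
    | zero => simp [hf1]
    | succ n ih =>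
      rw [pow_succ, hf (σ' ^ n) σ']
      have h2 : (glRep p G (σ' ^ n) (f σ')) 1 = y := by
        rw [hρ, hσpow n, hfσ, mulVec_two']
        simp
      rw [Pi.add_apply, ih, h2]
      push_cast; ring
  -- the conjugation relation
  set μ : ZMod p := a * d⁻¹ with hμ
  have hμd : μ * d = a := by
    rw [hμ, mul_assoc, inv_mul_cancel₀ hd, mul_one]
  set m : ℕ := μ.val with hm
  have hmcast : (m : ZMod p) = μ := ZMod.natCast_zmod_val μ
  have hcomm : σ' ^ m * (⟨g, hg⟩ : ↥G) = (⟨g, hg⟩ : ↥G) * σ' := by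
    apply Subtype.ext; apply Units.ext
    rw [MulMemClass.coe_mul, MulMemClass.coe_mul, Units.val_mul, Units.val_mul, hσpow m, hmcast,
      hMeq]
    ext i j
    fin_cases i <;> fin_cases j <;>
      simp [hσ', sigmaGL, Matrix.mul_apply, Fin.sum_univ_two] <;>
      linear_combination hμd
  have hμne : μ ≠ d := by
    intro hh
    apply hne
    rw [← hμd, hh]; ring
  -- second coordinate of the cocycle at σ' vanishes
  have hyzero : y = 0 := by
    have heq := hf (σ' ^ m) (⟨g, hg⟩ : ↥G)
    rw [hcomm, hf (⟨g, hg⟩ : ↥G) σ'] at heq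
    have h1c := congrFun heq 1
    rw [Pi.add_apply, Pi.add_apply, hρ, hρ, hσpow m, hmcast, hMeq, hfσ, mulVec_two', mulVec_two',
      hfn1 m, hmcast] at h1c
    simp at h1c
    -- h1c : f g' 1 + d * y = μ * y + f g' 1  (roughly)
    have h3 : (d - μ) * y = 0 := by linear_combination h1c
    rcases mul_eq_zero.mp h3 with h4 | h4
    · exact absurd (sub_eq_zero.mp h4).symm hμne
    · exact h4
  -- normalize the cocycle so it vanishes on U
  set v₁ : Fin 2 → ZMod p := ![0, x] with hv₁
  set f' : ↥G → Fin 2 → ZMod p := fun h => f h - (glRep p G h v₁ - v₁) with hf'def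
  have hf'coc : ∀ s t : ↥G, f' (s * t) = f' s + glRep p G s (f' t) := by
    intro s t
    simp only [hf'def]
    rw [hf s t, map_mul, Module.End.mul_apply, map_sub, map_sub]
    abel
  have hf'σ : f' σ' = 0 := by
    simp only [hf'def]
    funext i
    rw [hρ]
    have : ((σ' : GL (Fin 2) (ZMod p)) : Matrix (Fin 2) (Fin 2) (ZMod p)) = !![1,1;0,1] := rfl
    rw [this, hv₁, mulVec_two', hfσ, hyzero]
    fin_cases i <;> simp
  have hf'1 : f' 1 = 0 := by
    simp only [hf'def]
    rw [hf1, map_one]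
    simp
  have hf'pow : ∀ n : ℕ, f' (σ' ^ n) = 0 := by
    intro n
    induction n with
    | zero => simpa using hf'1
    | succ n ih => rw [pow_succ, hf'coc, ih, hf'σ]; simp
  haveI : Finite ↥G := inferInstance
  have hf'U : ∀ u ∈ Subgroup.zpowers σ', f' u = 0 := by
    intro u hu
    obtain ⟨n, hn⟩ := (isOfFinOrder_of_finite σ').mem_powers_iff_mem_zpowers.mpr hu
    rw [← hn]
    exact hf'pow n
  -- averaging over coset representatives
  set Us : Subgroup ↥G := Subgroup.zpowers σ' with hUs
  haveI : Fintype (↥G ⧸ Us) := Fintype.ofFinite _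
  set t : ℕ := Fintype.card (↥G ⧸ Us) with ht
  set v₀ : Fin 2 → ZMod p := ∑ q : ↥G ⧸ Us, f' (Quotient.out q) with hv₀
  have key : ∀ h : ↥G, t • f' h = v₀ - glRep p G h v₀ := by
    intro h
    have e1 : ∀ q : ↥G ⧸ Us, f' (h * Quotient.out q) = f' (Quotient.out (h • q)) := by
      intro q
      have hmem : (Quotient.out (h • q))⁻¹ * (h * Quotient.out q) ∈ Us := by
        rw [← QuotientGroup.eq, QuotientGroup.out_eq']
        have : QuotientGroup.mk (h * Quotient.out q) = h • q := by
          rw [← smul_eq_mul, MulAction.Quotient.mk_smul_out]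
        rw [this]
      have hsplit : h * Quotient.out q
          = Quotient.out (h • q) * ((Quotient.out (h • q))⁻¹ * (h * Quotient.out q)) := by
        group
      rw [hsplit, hf'coc, hf'U _ hmem]
      simp
    have e2 : (∑ q : ↥G ⧸ Us, f' (h * Quotient.out q)) = v₀ := by
      rw [Finset.sum_congr rfl (fun q _ => e1 q)]
      exact Fintype.sum_equiv (MulAction.toPerm h) _ _ (fun q => rfl)
    have e3 : (∑ q : ↥G ⧸ Us, f' (h * Quotient.out q)) = t • f' h + glRep p G h v₀ := by
      calc (∑ q : ↥G ⧸ Us, f' (h * Quotient.out q))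
          = ∑ q : ↥G ⧸ Us, (f' h + glRep p G h (f' (Quotient.out q))) := by
            exact Finset.sum_congr rfl (fun q _ => hf'coc h (Quotient.out q))
        _ = t • f' h + glRep p G h v₀ := by
            rw [Finset.sum_add_distrib, Finset.sum_const, ← map_sum, Finset.card_univ]
    rw [e3] at e2
    exact eq_sub_of_add_eq e2
  -- p does not divide t
  have hcardU : Nat.card Us = p := by
    rw [Nat.card_zpowers]
    exact orderOf_eq_prime hσp hσ1
  have hfact : Nat.card ↥G = t * p := by
    rw [Subgroup.card_eq_card_quotient_mul_card_subgroup Us, hcardU, Nat.card_eq_fintype_card]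
  have hGLcard : Nat.card (GL (Fin 2) (ZMod p)) = ((p ^ 2 - 1) * (p - 1)) * p := by
    have hsub : p ^ 2 - p = p * (p - 1) := by
      rw [Nat.mul_sub, mul_one, pow_two]
    rw [Matrix.card_GL_field, Fin.prod_univ_two]
    simp only [ZMod.card, Fin.isValue, Fin.val_zero, Fin.val_one, pow_zero, pow_one]
    rw [hsub]
    ring
  have hp2 : 2 ≤ p := (Fact.out (p := p.Prime)).two_le
  have hpt : ¬ p ∣ t := by
    intro hpdvd
    have h2 : p * p ∣ Nat.card ↥G := by
      rw [hfact]
      exact mul_dvd_mul_right hpdvd p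
    have h3 : p * p ∣ ((p ^ 2 - 1) * (p - 1)) * p := by
      rw [← hGLcard]
      exact h2.trans (Subgroup.card_subgroup_dvd_card G)
    have h4 : p ∣ (p ^ 2 - 1) * (p - 1) :=
      (Nat.mul_dvd_mul_iff_right (Nat.lt_of_lt_of_le Nat.zero_lt_two hp2)).mp h3
    rcases (Fact.out (p := p.Prime)).dvd_mul.mp h4 with h5 | h5
    · have h6 : p ∣ p ^ 2 - (p ^ 2 - 1) := Nat.dvd_sub (dvd_pow_self p two_ne_zero) h5
      have h7 : p ^ 2 - (p ^ 2 - 1) = 1 := Nat.sub_sub_self (Nat.one_le_pow _ _ (by omega))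
      rw [h7] at h6
      have := Nat.le_of_dvd one_pos h6
      omega
    · have h6 : p ∣ p - (p - 1) := Nat.dvd_sub dvd_rfl h5
      rw [Nat.sub_sub_self (by omega)] at h6
      have := Nat.le_of_dvd one_pos h6
      omega
  have htnz : (t : ZMod p) ≠ 0 := fun h0 => hpt ((ZMod.natCast_eq_zero_iff t p).mp h0)
  refine ⟨-(((t : ZMod p))⁻¹ • v₀) + v₁, ?_⟩
  intro h
  have hkey : (t : ZMod p) • f' h = v₀ - glRep p G h v₀ := by
    rw [Nat.cast_smul_eq_nsmul]; exact key h
  have hft : f' h = ((t : ZMod p))⁻¹ • (v₀ - glRep p G h v₀) := by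
    rw [← hkey, smul_smul, inv_mul_cancel₀ htnz, one_smul]
  have hfh : f h = f' h + (glRep p G h v₁ - v₁) := by simp [hf'def]
  rw [hfh, hft, map_add, map_neg, map_smul, smul_sub]
  abel

/-- Let `p` be a prime and `G ⊆ GL₂(𝔽_p)` a subgroup containing the group
`U = { [[1,b],[0,1]] : b ∈ 𝔽_p }` of upper unitriangular matrices, and let `V = 𝔽_p²` with
the natural `G`-action.  If `H¹(G,V) ≠ 0`, then every `g ∈ G` that normalizes `U`
(i.e. `gUg⁻¹ = U`) is upper triangular (its `(2,1)`-entry is `0`) and its diagonal entries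
satisfy `g₁₁ = (g₂₂)²`. -/
theorem normalizer_shape_of_H1_ne_zero (p : ℕ) [Fact p.Prime]
    (G : Subgroup (GL (Fin 2) (ZMod p)))
    (hU : uniSet p ⊆ (G : Set (GL (Fin 2) (ZMod p))))
    (h1 : ¬ H1Trivial (glRep p G)) :
    ∀ g ∈ G, ((fun u => g * u * g⁻¹) '' uniSet p = uniSet p) →
      ((g : Matrix (Fin 2) (Fin 2) (ZMod p)) 1 0 = 0 ∧
        (g : Matrix (Fin 2) (Fin 2) (ZMod p)) 0 0 =
          ((g : Matrix (Fin 2) (Fin 2) (ZMod p)) 1 1) ^ 2) := by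
  exact normalizer_shape_of_H1_ne_zero' p G hU h1
end

section
/- Let p be a prime, V a 2-dimensional vector space over 𝔽_p, and G ⊆ GL(V) a subgroup isomorphic, as an abstract group, to the symmetric group S₃. Then some simple 𝔽_p[G]-module is a common irreducible factor of V and End(V). -/
/-- A representation `ρ.asModule` is an `AddCommGroup` whenever `V` is. -/
noncomputable instance Representation.asModuleAddCommGroup {k G V : Type*} [CommRing k]
    [Group G] [AddCommGroup V] [Module k V] (ρ : Representation k G V) :
    AddCommGroup ρ.asModule :=
  inferInstanceAs <| AddCommGroup V

/-- The conjugation representation of `G` on `End(V)`: `g • φ = ρ g ∘ φ ∘ ρ g⁻¹`. -/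
def Representation.conjEnd {k G V : Type*} [CommRing k] [Group G] [AddCommGroup V]
    [Module k V] (ρ : Representation k G V) : Representation k G (V →ₗ[k] V) where
  toFun g :=
    { toFun := fun φ => ρ g ∘ₗ φ ∘ₗ ρ g⁻¹
      map_add' := fun φ ψ => by simp only [LinearMap.add_comp, LinearMap.comp_add]
      map_smul' := fun c φ => by
        simp only [LinearMap.smul_comp, LinearMap.comp_smul, RingHom.id_apply] }
  map_one' := by ext φ v; simp
  map_mul' g h := by
    ext φ v
    simp [mul_inv_rev, map_mul, Module.End.mul_apply]

/-- Two `R`-modules have a common irreducible factor if some simple `R`-module is isomorphic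
both to a subquotient (a quotient of a submodule) of the first and to a subquotient of the
second. -/
def HasCommonIrreducibleFactor (R V W : Type*) [Ring R] [AddCommGroup V] [Module R V]
    [AddCommGroup W] [Module R W] : Prop :=
  ∃ (A : Submodule R V) (B : Submodule R A) (A' : Submodule R W) (B' : Submodule R A'),
    IsSimpleModule R (A ⧸ B) ∧ Nonempty ((A ⧸ B) ≃ₗ[R] (A' ⧸ B'))

/-- The tautological representation of a subgroup `G ⊆ GL(V)` on `V`. -/
def tautRep (p : ℕ) (V : Type) [AddCommGroup V] [Module (ZMod p) V]
    (G : Subgroup (V ≃ₗ[ZMod p] V)) : Representation (ZMod p) G V where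
  toFun g := ((g : V ≃ₗ[ZMod p] V) : V →ₗ[ZMod p] V)
  map_one' := by ext v; rfl
  map_mul' g h := by ext v; rfl

namespace S3Aux

/-! ### Facts about `Perm (Fin 3)` -/

def t₀ : Equiv.Perm (Fin 3) := Equiv.swap 0 1
def r₀ : Equiv.Perm (Fin 3) := Equiv.swap 0 2
def c₀ : Equiv.Perm (Fin 3) := t₀ * r₀

lemma f1 : c₀ * (c₀ * c₀) = 1 := by decide
lemma f2 : t₀ * t₀ = 1 := by decide
lemma f4 : c₀ ≠ 1 := by decide
lemma f5 : c₀ * t₀ ≠ t₀ * c₀ := by decide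
lemma f6 : ∀ g : Equiv.Perm (Fin 3), g⁻¹ * c₀ * g = c₀ ∨ g⁻¹ * c₀ * g = c₀ * c₀ := by decide
lemma f7 : ∀ g : Equiv.Perm (Fin 3),
    g = 1 ∨ g = c₀ ∨ g = c₀ * c₀ ∨ g = t₀ ∨ g = t₀ * c₀ ∨ g = t₀ * (c₀ * c₀) := by decide
lemma f8 : c₀ = r₀ * t₀ * r₀⁻¹ * t₀⁻¹ := by decide
lemma f9 : c₀ * t₀ = t₀ * (c₀ * c₀) := by decide
lemma f10 : t₀ * c₀ = c₀ * (t₀ * (c₀ * c₀)) := by decide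

/-! ### Generic infrastructure -/

open Representation

section Infra
variable {k G : Type*} [CommRing k] [Group G]
variable {V₁ V₂ : Type*} [AddCommGroup V₁] [Module k V₁] [AddCommGroup V₂] [Module k V₂]
variable (ρ : Representation k G V₁) (ρ₂ : Representation k G V₂)

lemma asmul (a : MonoidAlgebra k G) (x : ρ.asModule) : a • x = ρ.asAlgebraHom a x := rfl

lemma ksmul (r : k) (x : ρ.asModule) : r • x = (show V₁ from r • (show V₁ from x)) := rfl

instance : IsScalarTower k (MonoidAlgebra k G) ρ.asModule := by
  constructor
  intro r a x
  show ρ.asAlgebraHom (r • a) x = r • ρ.asAlgebraHom a x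
  rw [map_smul]
  rfl

lemma of_smul (g : G) (x : ρ.asModule) : (MonoidAlgebra.of k G g) • x = ρ g x := by
  rw [asmul, MonoidAlgebra.of_apply, asAlgebraHom_single, one_smul]

/-- A `G`-invariant `k`-submodule as a `MonoidAlgebra`-submodule. -/
def mkSub (W : Submodule k V₁) (h : ∀ (g : G), ∀ v ∈ W, ρ g v ∈ W) :
    Submodule (MonoidAlgebra k G) ρ.asModule where
  carrier := (W : Set V₁)
  add_mem' := fun ha hb => W.add_mem ha hb
  zero_mem' := W.zero_mem
  smul_mem' := by
    intro a x hx
    induction a using MonoidAlgebra.induction_on with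
    | of g => rw [of_smul]; exact h g x hx
    | add f g hf hg => rw [add_smul]; exact W.add_mem hf hg
    | smul r f hf => rw [smul_assoc]; exact W.smul_mem r hf

lemma mkSub_mem_iff (W : Submodule k V₁) (h) (x : ρ.asModule) :
    x ∈ mkSub ρ W h ↔ (show V₁ from x) ∈ W := Iff.rfl

/-- An equivariant `k`-linear map as a `MonoidAlgebra`-linear map. -/
def toLinA (f : V₁ →ₗ[k] V₂) (hf : ∀ (g : G) (v : V₁), f (ρ g v) = ρ₂ g (f v)) :
    ρ.asModule →ₗ[MonoidAlgebra k G] ρ₂.asModule where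
  toFun := f
  map_add' := f.map_add
  map_smul' := by
    intro a x
    simp only [RingHom.id_apply]
    induction a using MonoidAlgebra.induction_on with
    | of g => erw [of_smul, of_smul]; exact hf g x
    | add a b ha hb => erw [add_smul, add_smul, f.map_add, ha, hb]; rfl
    | smul r a ha =>
        erw [smul_assoc, smul_assoc]
        have h2 : f (r • (a • x)) = r • f (a • x) := f.map_smul r _
        rw [h2, ha]; rfl

lemma toLinA_apply (f : V₁ →ₗ[k] V₂) (hf) (x : ρ.asModule) :
    toLinA ρ ρ₂ f hf x = f x := rfl

end Infra

/-- A one-`k`-dimensional module over a `k`-algebra is simple. -/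
lemma span1 {k A X : Type*} [Field k] [Ring A] [Algebra k A] [AddCommGroup X]
    [Module A X] [Module k X] [IsScalarTower k A X] (x₀ : X) (h0 : x₀ ≠ 0)
    (hsp : ∀ y : X, ∃ r : k, y = r • x₀) : IsSimpleModule A X := by
  haveI : Nontrivial X := ⟨⟨x₀, 0, h0⟩⟩
  have key : ∀ N : Submodule A X, N ≠ ⊥ → N = ⊤ := by
    intro N hN
    obtain ⟨x, hxN, hx0⟩ := N.ne_bot_iff.mp hN
    obtain ⟨r, hr⟩ := hsp x
    have hr0 : r ≠ 0 := by rintro rfl; rw [zero_smul] at hr; exact hx0 hr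
    have hx₀N : x₀ ∈ N := by
      have : x₀ = r⁻¹ • x := by rw [hr, smul_smul, inv_mul_cancel₀ hr0, one_smul]
      rw [this, ← algebraMap_smul A r⁻¹ x]
      exact N.smul_mem _ hxN
    rw [Submodule.eq_top_iff']
    intro y
    obtain ⟨s, rfl⟩ := hsp y
    rw [← algebraMap_smul A s x₀]
    exact N.smul_mem _ hx₀N
  rw [isSimpleModule_iff]; constructor
  intro N
  by_cases h : N = ⊥
  · exact Or.inl h
  · exact Or.inr (key N h)

/-- Every element of a group isomorphic to `S₃` lies in any subgroup containing the images
of the generators. -/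
lemma mem_of_gen {G : Type*} [Group G] (e : G ≃* Equiv.Perm (Fin 3)) (S : Subgroup G)
    (hc : e.symm c₀ ∈ S) (ht : e.symm t₀ ∈ S) (g : G) : g ∈ S := by
  have hg : g = e.symm (e g) := (e.symm_apply_apply g).symm
  rcases f7 (e g) with h | h | h | h | h | h <;>
    rw [hg, h] <;>
    (try simp only [map_mul, map_one]) <;>
    first
      | exact S.one_mem
      | exact hc
      | exact S.mul_mem hc hc
      | exact ht
      | exact S.mul_mem ht hc
      | exact S.mul_mem ht (S.mul_mem hc hc)

section TwoRep
variable {p : ℕ} [Fact p.Prime] {V₁ V₂ : Type*} [AddCommGroup V₁] [Module (ZMod p) V₁]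
  [AddCommGroup V₂] [Module (ZMod p) V₂]
  {G : Type*} [Group G] (e : G ≃* Equiv.Perm (Fin 3))
  (ρ₁ : Representation (ZMod p) G V₁) (ρ₂ : Representation (ZMod p) G V₂)

/-- Equivariance on the two generators implies equivariance. -/
lemma equivar_ext (f : V₁ →ₗ[ZMod p] V₂)
    (hc : ∀ v, f (ρ₁ (e.symm c₀) v) = ρ₂ (e.symm c₀) (f v))
    (ht : ∀ v, f (ρ₁ (e.symm t₀) v) = ρ₂ (e.symm t₀) (f v)) :
    ∀ (g : G) (v : V₁), f (ρ₁ g v) = ρ₂ g (f v) := by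
  let S : Subgroup G :=
    { carrier := {g | ∀ v, f (ρ₁ g v) = ρ₂ g (f v)}
      one_mem' := by
        intro v
        rw [map_one, map_one, Module.End.one_apply, Module.End.one_apply]
      mul_mem' := by
        intro a b ha hb v
        have h1 : ρ₁ (a * b) v = ρ₁ a (ρ₁ b v) := by rw [map_mul]; rfl
        have h2 : ρ₂ (a * b) (f v) = ρ₂ a (ρ₂ b (f v)) := by rw [map_mul]; rfl
        rw [h1, h2, ha, hb]
      inv_mem' := by
        intro a ha v
        have h1 : f (ρ₁ a (ρ₁ a⁻¹ v)) = ρ₂ a (f (ρ₁ a⁻¹ v)) := ha _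
        have h2 : ρ₁ a (ρ₁ a⁻¹ v) = v := by
          rw [← Module.End.mul_apply, ← map_mul, mul_inv_cancel, map_one, Module.End.one_apply]
        rw [h2] at h1
        show f (ρ₁ a⁻¹ v) = ρ₂ a⁻¹ (f v)
        rw [h1, ← Module.End.mul_apply, ← map_mul, inv_mul_cancel, map_one,
          Module.End.one_apply] }
  intro g
  exact mem_of_gen e S hc ht g

end TwoRep


section Case1
open Representation

lemma f11 : t₀ * c₀ = c₀ * t₀ * (c₀ * c₀) := by decide

set_option maxHeartbeats 1000000 in
set_option synthInstance.maxHeartbeats 400000 in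
lemma case1 (p : ℕ) [Fact p.Prime] (V : Type) [AddCommGroup V] [Module (ZMod p) V]
    (hdim : Module.finrank (ZMod p) V = 2)
    (G : Subgroup (V ≃ₗ[ZMod p] V)) (e : G ≃* Equiv.Perm (Fin 3))
    (hfix : ∀ v : V, tautRep p V G (e.symm c₀) v = v → v = 0) :
    HasCommonIrreducibleFactor (MonoidAlgebra (ZMod p) G)
      (tautRep p V G).asModule ((tautRep p V G).conjEnd).asModule := by
  classical
  set ρ := tautRep p V G with hρ
  obtain ⟨c, hcdef⟩ : ∃ x : G, x = e.symm c₀ := ⟨_, rfl⟩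
  obtain ⟨t, htdef⟩ : ∃ x : G, x = e.symm t₀ := ⟨_, rfl⟩
  rw [← hcdef] at hfix
  have hFD : FiniteDimensional (ZMod p) V :=
    FiniteDimensional.of_finrank_pos (by rw [hdim]; norm_num)
  haveI hFD' : FiniteDimensional (ZMod p) ρ.asModule := hFD
  have hdim' : Module.finrank (ZMod p) ρ.asModule = 2 := hdim
  have rinj : ∀ g h : G, ρ g = ρ h → g = h := by
    intro g h hgh
    have : (g : V ≃ₗ[ZMod p] V) = (h : V ≃ₗ[ZMod p] V) :=
      LinearEquiv.toLinearMap_injective hgh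
    exact Subtype.coe_injective this
  -- group relations
  have hc3 : c * (c * c) = 1 := by rw [hcdef, ← map_mul, ← map_mul, f1, map_one]
  have ht2 : t * t = 1 := by rw [htdef, ← map_mul, f2, map_one]
  have hct : c * t ≠ t * c := by
    intro h
    apply f5
    have h2 := congrArg e h
    simpa only [map_mul, hcdef, htdef, MulEquiv.apply_symm_apply] using h2
  have htc : t * c = c * t * (c * c) := by
    rw [hcdef, htdef, ← map_mul, ← map_mul, ← map_mul, ← map_mul, f11]
  have hctt : c * t = t * (c * c) := by
    rw [hcdef, htdef, ← map_mul, ← map_mul, ← map_mul, f9]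
  have hcinv : c⁻¹ = c * c := inv_eq_of_mul_eq_one_right hc3
  have htinv : t⁻¹ = t := inv_eq_of_mul_eq_one_right ht2
  -- End relations
  have rc3 : ρ c * (ρ c * ρ c) = 1 := by rw [← map_mul, ← map_mul, hc3, map_one]
  have rt2 : ρ t * ρ t = 1 := by rw [← map_mul, ht2, map_one]
  have htct_g : t * c * t = c * c := by
    rw [hcdef, htdef, ← map_mul, ← map_mul, ← map_mul]
    exact congrArg e.symm (by decide)
  have rtct : ρ t * ρ c * ρ t = ρ c * ρ c := by
    have h := congrArg ρ htct_g
    rw [map_mul, map_mul, map_mul] at h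
    exact h
  have q0 : ρ c * ρ c + ρ c + 1 = 0 := by
    have h2 : (ρ c - 1) * (ρ c * ρ c + ρ c + 1) = 0 := by
      have expand : (ρ c - 1) * (ρ c * ρ c + ρ c + 1) = ρ c * (ρ c * ρ c) - 1 := by
        noncomm_ring
      rw [expand, rc3, sub_self]
    apply LinearMap.ext
    intro v
    have h3 : (ρ c - 1) ((ρ c * ρ c + ρ c + 1) v) = 0 := by
      rw [← Module.End.mul_apply, h2, LinearMap.zero_apply]
    rw [LinearMap.sub_apply, Module.End.one_apply, sub_eq_zero] at h3
    rw [LinearMap.zero_apply]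
    exact hfix _ h3
  have hcc : ρ c * ρ c = -(1 : V →ₗ[ZMod p] V) - ρ c := by
    have h := q0
    rw [add_assoc] at h
    have h2 := eq_neg_of_add_eq_zero_left h
    rw [h2, neg_add]
    abel
  -- cancellation of scalars
  have canc : ∀ (w : V) (a b : ZMod p), w ≠ 0 → a • w = b • w → a = b := by
    intro w a b hw h
    have h2 : (a - b) • w = 0 := by rw [sub_smul, h, sub_self]
    rcases smul_eq_zero.mp h2 with h3 | h3
    · exact sub_eq_zero.mp h3
    · exact absurd h3 hw
  -- a nonzero fixed vector for t
  have hkt : ∃ v : V, v ≠ 0 ∧ ρ t v = v := by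
    by_contra hcon
    push_neg at hcon
    have hneg : ∀ x : V, ρ t x = -x := by
      intro x
      have h1 : ρ t (ρ t x + x) = ρ t x + x := by
        rw [map_add]
        have h0 : ρ t (ρ t x) = x := by
          rw [← Module.End.mul_apply, rt2, Module.End.one_apply]
        rw [h0, add_comm]
      have h2 : ρ t x + x = 0 := by
        by_contra h0
        exact (hcon _ h0) h1
      exact eq_neg_of_add_eq_zero_left h2
    have hcomm : ρ (t * c) = ρ (c * t) := by
      apply LinearMap.ext
      intro v
      have h1 : ρ (t * c) v = ρ t (ρ c v) := by rw [map_mul]; rfl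
      have h2 : ρ (c * t) v = ρ c (ρ t v) := by rw [map_mul]; rfl
      rw [h1, h2, hneg (ρ c v), hneg v, map_neg]
    exact hct (rinj _ _ hcomm).symm
  obtain ⟨e₀, he0, hte⟩ := hkt
  -- no common eigenvector
  have nofix2 : ∀ (v : V) (l m : ZMod p), v ≠ 0 → ρ c v = l • v → ρ t v = m • v → False := by
    intro v l m hv hcl htm
    have hl0 : l ≠ 0 := by
      rintro rfl
      rw [zero_smul] at hcl
      apply hv
      have h1 : ρ c⁻¹ (ρ c v) = v := by
        rw [← Module.End.mul_apply, ← map_mul, inv_mul_cancel, map_one, Module.End.one_apply]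
      rw [hcl, map_zero] at h1
      exact h1.symm
    have hm0 : m ≠ 0 := by
      rintro rfl
      rw [zero_smul] at htm
      apply hv
      have h1 : ρ t⁻¹ (ρ t v) = v := by
        rw [← Module.End.mul_apply, ← map_mul, inv_mul_cancel, map_one, Module.End.one_apply]
      rw [htm, map_zero] at h1
      exact h1.symm
    have hL : ρ c (ρ t v) = (m * l) • v := by
      rw [htm, map_smul, hcl, smul_smul]
    have hR : ρ c (ρ t v) = (m * (l * l)) • v := by
      have h1 : ρ c (ρ t v) = ρ (c * t) v := by rw [map_mul]; rfl
      have h2 : ρ (t * (c * c)) v = ρ t (ρ c (ρ c v)) := by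
        rw [map_mul, map_mul]; rfl
      rw [h1, hctt, h2, hcl]
      simp only [map_smul, hcl, htm, smul_smul]
      module
    have hml : m * l = m * (l * l) := canc v _ _ hv (by rw [← hL, ← hR])
    have hll : l = l * l := mul_left_cancel₀ hm0 hml
    have hl1 : (1 : ZMod p) = l := by
      apply mul_left_cancel₀ hl0
      rw [mul_one]
      exact hll
    apply hv
    apply hfix
    rw [hcl, ← hl1, one_smul]
  -- extraction of eigenvalue from linear dependence
  have extract : ∀ (w v : V), v ≠ 0 → ¬LinearIndependent (ZMod p) ![w, v] →
      ∃ l : ZMod p, w = l • v := by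
    intro w v hv hind
    rw [LinearIndependent.pair_iff] at hind
    push_neg at hind
    obtain ⟨s, r, hsr, hne⟩ := hind
    by_cases hs : s = 0
    · exfalso
      subst hs
      rw [zero_smul, zero_add] at hsr
      rcases smul_eq_zero.mp hsr with h | h
      · exact hne rfl h
      · exact hv h
    · refine ⟨-(s⁻¹ * r), ?_⟩
      have h1 : s • w = -(r • v) := by rwa [add_eq_zero_iff_eq_neg] at hsr
      calc w = s⁻¹ • (s • w) := by rw [smul_smul, inv_mul_cancel₀ hs, one_smul]
        _ = s⁻¹ • (-(r • v)) := by rw [h1]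
        _ = -(s⁻¹ * r) • v := by rw [smul_neg, smul_smul, neg_smul]
  have hli : LinearIndependent (ZMod p) ![ρ c e₀, e₀] := by
    by_contra h
    obtain ⟨l, hl⟩ := extract _ _ he0 h
    exact nofix2 e₀ l 1 he0 hl (by rw [one_smul]; exact hte)
  let b := basisOfLinearIndependentOfCardEqFinrank hli (by rw [Fintype.card_fin, hdim])
  have hb : ⇑b = ![ρ c e₀, e₀] := coe_basisOfLinearIndependentOfCardEqFinrank hli _
  have hb0 : b 0 = ρ c e₀ := by rw [hb]; rfl
  have hb1 : b 1 = e₀ := by rw [hb]; rfl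
  have expand : ∀ v : V, b.repr v 0 • ρ c e₀ + b.repr v 1 • e₀ = v := by
    intro v
    have h := b.sum_repr v
    rw [Fin.sum_univ_two, hb0, hb1] at h
    exact h
  have uniq : ∀ x y x' y' : ZMod p,
      x • e₀ + y • ρ c e₀ = x' • e₀ + y' • ρ c e₀ → x = x' ∧ y = y' := by
    intro x y x' y' h
    have h2 : (y - y') • ρ c e₀ + (x - x') • e₀ =
        (x • e₀ + y • ρ c e₀) - (x' • e₀ + y' • ρ c e₀) := by
      module
    rw [h, sub_self] at h2
    obtain ⟨hy, hx⟩ := hli.eq_zero_of_pair h2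
    exact ⟨sub_eq_zero.mp hx, sub_eq_zero.mp hy⟩
  -- the multiplication map
  let M : V →ₗ[ZMod p] (V →ₗ[ZMod p] V) :=
    (b.coord 1).smulRight (1 : V →ₗ[ZMod p] V) + (b.coord 0).smulRight (ρ c)
  have Mapp : ∀ v, M v = b.repr v 1 • (1 : V →ₗ[ZMod p] V) + b.repr v 0 • ρ c := by
    intro v
    simp [M, LinearMap.add_apply, LinearMap.smulRight_apply, Module.Basis.coord_apply]
  have Me : ∀ v, M v e₀ = v := by
    intro v
    rw [Mapp]
    simp only [LinearMap.add_apply, LinearMap.smul_apply, Module.End.one_apply]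
    rw [add_comm]
    exact expand v
  have uniqN : ∀ N N' : V →ₗ[ZMod p] V,
      (∃ x y : ZMod p, N = x • (1 : V →ₗ[ZMod p] V) + y • ρ c) →
      (∃ x y : ZMod p, N' = x • (1 : V →ₗ[ZMod p] V) + y • ρ c) →
      N e₀ = N' e₀ → N = N' := by
    rintro N N' ⟨x, y, rfl⟩ ⟨x', y', rfl⟩ h
    simp only [LinearMap.add_apply, LinearMap.smul_apply, Module.End.one_apply] at h
    obtain ⟨hx, hy⟩ := uniq x y x' y' h
    rw [hx, hy]
  -- commutation of M v with ρ c
  have hMcomm : ∀ v, M v * ρ c = ρ c * M v := by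
    intro v
    rw [Mapp, add_mul, mul_add, smul_mul_assoc, smul_mul_assoc, one_mul,
      mul_smul_comm, mul_smul_comm, mul_one]
  have hMcc : ∀ v, M v * (ρ c * ρ c) = ρ c * ρ c * M v := by
    intro v
    rw [← mul_assoc, hMcomm v, mul_assoc, hMcomm v, ← mul_assoc]
  -- key identities
  have hMc : ∀ v, M (ρ c v) = ρ c * M v := by
    intro v
    refine uniqN _ _ ⟨_, _, Mapp _⟩ ⟨-(b.repr v 0), b.repr v 1 - b.repr v 0, ?_⟩ ?_
    · rw [Mapp, mul_add, mul_smul_comm, mul_smul_comm, mul_one, hcc]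
      module
    · rw [Me, Module.End.mul_apply, Me]
  have hMt : ∀ v, M (ρ t v) = ρ t * M v * ρ t := by
    intro v
    refine uniqN _ _ ⟨_, _, Mapp _⟩ ⟨b.repr v 1 - b.repr v 0, -(b.repr v 0), ?_⟩ ?_
    · rw [Mapp, mul_add, add_mul, mul_smul_comm, mul_smul_comm, mul_one,
        smul_mul_assoc, smul_mul_assoc, rt2, rtct, hcc]
      module
    · rw [Me, Module.End.mul_apply, Module.End.mul_apply, hte, Me]
  -- the equivariant map
  let Φ : V →ₗ[ZMod p] (V →ₗ[ZMod p] V) := (LinearMap.mulLeft (ZMod p) (ρ t)).comp M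
  have Φapp : ∀ v, Φ v = ρ t * M v := fun v => rfl
  have conjApp : ∀ (g : G) (ψ : V →ₗ[ZMod p] V), ρ.conjEnd g ψ = ρ g * ψ * ρ g⁻¹ :=
    fun g ψ => rfl
  have hEc : ∀ v, Φ (ρ c v) = ρ.conjEnd c (Φ v) := by
    intro v
    rw [Φapp, Φapp, conjApp, hMc v, hcinv]
    calc ρ t * (ρ c * M v) = ρ (t * c) * M v := by rw [map_mul, mul_assoc]
      _ = ρ (c * t * (c * c)) * M v := by rw [← htc]
      _ = ρ c * (ρ t * M v) * ρ (c * c) := by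
          simp only [map_mul, mul_assoc]
          rw [hMcc v]
          simp only [mul_assoc]
  have hEt : ∀ v, Φ (ρ t v) = ρ.conjEnd t (Φ v) := by
    intro v
    rw [Φapp, Φapp, conjApp, hMt v, htinv]
    simp only [mul_assoc]
  have hequiv : ∀ (g : G) (v : V), Φ (ρ g v) = ρ.conjEnd g (Φ v) := by
    rw [hcdef] at hEc
    rw [htdef] at hEt
    exact equivar_ext e ρ ρ.conjEnd Φ hEc hEt
  let Φ' := toLinA ρ ρ.conjEnd Φ hequiv
  have hker : ∀ x : ρ.asModule, Φ' x = 0 → x = 0 := by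
    intro x hx
    have h1 : Φ x = 0 := hx
    have h2 : M x = 0 := by
      have h3 : ρ t * Φ x = M x := by
        rw [Φapp x, ← mul_assoc, rt2, one_mul]
      rw [← h3, h1, mul_zero]
    have h4 := Me x
    rw [h2, LinearMap.zero_apply] at h4
    exact h4.symm
  have hinj : Function.Injective Φ' := by
    rw [← LinearMap.ker_eq_bot]
    apply (Submodule.eq_bot_iff _).mpr
    intro x hx
    exact hker x hx
  haveI : Nontrivial ρ.asModule := ⟨⟨e₀, 0, he0⟩⟩
  haveI hsimple : IsSimpleModule (MonoidAlgebra (ZMod p) G) ρ.asModule := by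
    haveI : Nontrivial (Submodule (MonoidAlgebra (ZMod p) G) ρ.asModule) := by
      refine ⟨⊥, ⊤, fun h => he0 ?_⟩
      have h2 : (e₀ : ρ.asModule) ∈ (⊥ : Submodule (MonoidAlgebra (ZMod p) G) ρ.asModule) := by
        rw [h]; trivial
      exact h2
    rw [isSimpleModule_iff]; constructor
    intro N
    by_cases hN : N = ⊥
    · exact Or.inl hN
    right
    obtain ⟨v, hvN, hv0⟩ := N.ne_bot_iff.mp hN
    have ksmulmem : ∀ (r : ZMod p) (x : ρ.asModule), x ∈ N → r • x ∈ N := by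
      intro r x hx
      rw [← algebraMap_smul (MonoidAlgebra (ZMod p) G) r x]
      exact N.smul_mem _ hx
    have hv0' : (v : V) ≠ 0 := hv0
    have spanN : ∀ w : ρ.asModule, w ∈ N → LinearIndependent (ZMod p) ![(w : V), (v : V)] →
        N = ⊤ := by
      intro w hw hind
      rw [Submodule.eq_top_iff']
      intro y
      let b2 := basisOfLinearIndependentOfCardEqFinrank hind
        (by rw [Fintype.card_fin]; exact hdim'.symm)
      have hb2 : ⇑b2 = ![(w : V), (v : V)] := coe_basisOfLinearIndependentOfCardEqFinrank hind _
      have h := b2.sum_repr (y : V)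
      rw [Fin.sum_univ_two] at h
      have hb20 : b2 0 = (w : V) := by rw [hb2]; rfl
      have hb21 : b2 1 = (v : V) := by rw [hb2]; rfl
      rw [hb20, hb21] at h
      have hmem : b2.repr (y : V) 0 • w + b2.repr (y : V) 1 • v ∈ N :=
        N.add_mem (ksmulmem _ _ hw) (ksmulmem _ _ hvN)
      have hy : (b2.repr (y : V) 0 • w + b2.repr (y : V) 1 • v : ρ.asModule) = y := h
      rw [hy] at hmem
      exact hmem
    by_cases hcv : LinearIndependent (ZMod p) ![ρ c (v : V), (v : V)]
    · have hcvN : (ρ c (v : V) : ρ.asModule) ∈ N := by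
        have h5 := N.smul_mem (MonoidAlgebra.of (ZMod p) G c) hvN
        rwa [of_smul] at h5
      exact spanN _ hcvN hcv
    · obtain ⟨l, hl⟩ := extract _ _ hv0' hcv
      by_cases htv : LinearIndependent (ZMod p) ![ρ t (v : V), (v : V)]
      · have htvN : (ρ t (v : V) : ρ.asModule) ∈ N := by
          have h5 := N.smul_mem (MonoidAlgebra.of (ZMod p) G t) hvN
          rwa [of_smul] at h5
        exact spanN _ htvN htv
      · obtain ⟨m, hm⟩ := extract _ _ hv0' htv
        exact (nofix2 (v : V) l m hv0' hl hm).elim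
  have E1 := (Submodule.quotEquivOfEqBot (R := MonoidAlgebra (ZMod p) G) (M := (⊤ : Submodule (MonoidAlgebra (ZMod p) G) ρ.asModule))
      (⊥ : Submodule (MonoidAlgebra (ZMod p) G)
        (⊤ : Submodule (MonoidAlgebra (ZMod p) G) ρ.asModule)) rfl).trans
      Submodule.topEquiv
  have E3 := LinearEquiv.ofInjective Φ' hinj
  have E4 := (Submodule.quotEquivOfEqBot (R := MonoidAlgebra (ZMod p) G) (M := (LinearMap.range Φ'))
        (⊥ : Submodule (MonoidAlgebra (ZMod p) G) (LinearMap.range Φ')) rfl).symm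
  have E5 := E1.trans (E3.trans E4)
  have S1 : IsSimpleModule (MonoidAlgebra (ZMod p) G) _ := IsSimpleModule.congr E1
  refine ⟨⊤, ⊥, LinearMap.range Φ', ⊥, S1, ?_⟩
  exact ⟨E5⟩
end Case1

section Case2
open Representation

set_option maxHeartbeats 1600000 in
set_option synthInstance.maxHeartbeats 400000 in
lemma case2 (p : ℕ) [Fact p.Prime] (V : Type) [AddCommGroup V] [Module (ZMod p) V]
    (hdim : Module.finrank (ZMod p) V = 2)
    (G : Subgroup (V ≃ₗ[ZMod p] V)) (e : G ≃* Equiv.Perm (Fin 3))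
    (e₀ : V) (he0 : e₀ ≠ 0) (hce : tautRep p V G (e.symm c₀) e₀ = e₀) :
    HasCommonIrreducibleFactor (MonoidAlgebra (ZMod p) G)
      (tautRep p V G).asModule ((tautRep p V G).conjEnd).asModule := by
  classical
  set ρ := tautRep p V G with hρ
  obtain ⟨c, hcdef⟩ : ∃ x : G, x = e.symm c₀ := ⟨_, rfl⟩
  obtain ⟨t, htdef⟩ : ∃ x : G, x = e.symm t₀ := ⟨_, rfl⟩
  obtain ⟨rr, hrdef⟩ : ∃ x : G, x = e.symm r₀ := ⟨_, rfl⟩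
  rw [← hcdef] at hce
  have hFD : FiniteDimensional (ZMod p) V :=
    FiniteDimensional.of_finrank_pos (by rw [hdim]; norm_num)
  haveI hFD' : FiniteDimensional (ZMod p) ρ.asModule := hFD
  have hdim' : Module.finrank (ZMod p) ρ.asModule = 2 := hdim
  have rinj : ∀ g h : G, ρ g = ρ h → g = h := by
    intro g h hgh
    have : (g : V ≃ₗ[ZMod p] V) = (h : V ≃ₗ[ZMod p] V) :=
      LinearEquiv.toLinearMap_injective hgh
    exact Subtype.coe_injective this
  have hc3 : c * (c * c) = 1 := by rw [hcdef, ← map_mul, ← map_mul, f1, map_one]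
  have ht2 : t * t = 1 := by rw [htdef, ← map_mul, f2, map_one]
  have hct : c * t ≠ t * c := by
    intro h
    apply f5
    have h2 := congrArg e h
    simpa only [map_mul, hcdef, htdef, MulEquiv.apply_symm_apply] using h2
  have hcinv : c⁻¹ = c * c := inv_eq_of_mul_eq_one_right hc3
  have htinv : t⁻¹ = t := inv_eq_of_mul_eq_one_right ht2
  have hcom : c = rr * t * rr⁻¹ * t⁻¹ := by
    rw [hcdef, htdef, hrdef, ← map_inv, ← map_inv, ← map_mul, ← map_mul, ← map_mul]
    exact congrArg e.symm (by decide)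
  have hcne : c ≠ 1 := by
    rw [hcdef]
    intro h
    apply f4
    have h2 := congrArg e h
    rwa [MulEquiv.apply_symm_apply, map_one] at h2
  have canc : ∀ (w : V) (a b : ZMod p), w ≠ 0 → a • w = b • w → a = b := by
    intro w a b hw h
    have h2 : (a - b) • w = 0 := by rw [sub_smul, h, sub_self]
    rcases smul_eq_zero.mp h2 with h3 | h3
    · exact sub_eq_zero.mp h3
    · exact absurd h3 hw
  have conjc : ∀ g : G, c * g = g * c ∨ c * g = g * (c * c) := by
    intro g
    have f6' : ∀ σ : Equiv.Perm (Fin 3), c₀ * σ = σ * c₀ ∨ c₀ * σ = σ * (c₀ * c₀) := by decide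
    rcases f6' (e g) with h | h
    · left
      have h2 := congrArg e.symm h
      rw [map_mul, map_mul, MulEquiv.symm_apply_apply] at h2
      rw [hcdef]
      exact h2
    · right
      have h2 := congrArg e.symm h
      rw [map_mul, map_mul, map_mul, MulEquiv.symm_apply_apply] at h2
      rw [hcdef]
      exact h2
  have hPmem : ∀ v : V, ρ c v = v → ∀ g : G, ρ c (ρ g v) = ρ g v := by
    intro v hv g
    have h1 : ρ c (ρ g v) = ρ (c * g) v := by rw [map_mul]; rfl
    rcases conjc g with h | h
    · rw [h1, h, map_mul]
      show ρ g (ρ c v) = ρ g v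
      rw [hv]
    · rw [h1, h, map_mul, map_mul]
      show ρ g (ρ c (ρ c v)) = ρ g v
      rw [hv, hv]
  set P : Submodule (ZMod p) V := LinearMap.ker (ρ c - 1) with hPdef
  have hPiff : ∀ v : V, v ∈ P ↔ ρ c v = v := by
    intro v
    rw [hPdef, LinearMap.mem_ker, LinearMap.sub_apply, Module.End.one_apply, sub_eq_zero]
  have he0P : e₀ ∈ P := (hPiff e₀).mpr hce
  have hPinv : ∀ (g : G), ∀ v ∈ P, ρ g v ∈ P := fun g v hv =>
    (hPiff _).mpr (hPmem v ((hPiff v).mp hv) g)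
  have hPne : P ≠ ⊤ := by
    intro h
    apply hcne
    apply rinj c 1
    apply LinearMap.ext
    intro v
    rw [map_one, Module.End.one_apply]
    exact (hPiff v).mp (h ▸ Submodule.mem_top)
  have hspme : Submodule.span (ZMod p) {e₀} ≤ P := by
    rw [Submodule.span_le, Set.singleton_subset_iff]
    exact he0P
  have hPle : P ≤ Submodule.span (ZMod p) {e₀} := by
    intro u hu
    by_contra hun
    have hind : LinearIndependent (ZMod p) ![u, e₀] := by
      rw [LinearIndependent.pair_iff]
      intro s r hsr
      by_cases hs : s = 0
      · subst hs
        rw [zero_smul, zero_add] at hsr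
        rcases smul_eq_zero.mp hsr with h | h
        · exact ⟨rfl, h⟩
        · exact absurd h he0
      · exfalso
        apply hun
        rw [Submodule.mem_span_singleton]
        refine ⟨-(s⁻¹ * r), ?_⟩
        have h1 : s • u = -(r • e₀) := by rwa [add_eq_zero_iff_eq_neg] at hsr
        calc -(s⁻¹ * r) • e₀ = s⁻¹ • (-(r • e₀)) := by
              rw [smul_neg, smul_smul, neg_smul]
          _ = s⁻¹ • (s • u) := by rw [h1]
          _ = u := by rw [smul_smul, inv_mul_cancel₀ hs, one_smul]
    apply hPne
    rw [Submodule.eq_top_iff']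
    intro y
    let b2 := basisOfLinearIndependentOfCardEqFinrank hind (by rw [Fintype.card_fin, hdim])
    have hb2 : ⇑b2 = ![u, e₀] := coe_basisOfLinearIndependentOfCardEqFinrank hind _
    have h := b2.sum_repr y
    rw [Fin.sum_univ_two] at h
    have hb20 : b2 0 = u := by rw [hb2]; rfl
    have hb21 : b2 1 = e₀ := by rw [hb2]; rfl
    rw [hb20, hb21] at h
    rw [← h]
    exact P.add_mem (P.smul_mem _ hu) (P.smul_mem _ he0P)
  have hPspan : P = Submodule.span (ZMod p) {e₀} := le_antisymm hPle hspme
  obtain ⟨f₀, hf0⟩ : ∃ v : V, v ∉ P := by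
    by_contra h
    push_neg at h
    exact hPne (Submodule.eq_top_iff'.mpr h)
  have hf0e : f₀ ∉ Submodule.span (ZMod p) {e₀} := by rw [← hPspan]; exact hf0
  have hindef : LinearIndependent (ZMod p) ![e₀, f₀] := by
    rw [LinearIndependent.pair_iff]
    intro s r hsr
    by_cases hr : r = 0
    · subst hr
      rw [zero_smul, add_zero] at hsr
      rcases smul_eq_zero.mp hsr with h | h
      · exact ⟨h, rfl⟩
      · exact absurd h he0
    · exfalso
      apply hf0e
      rw [Submodule.mem_span_singleton]
      refine ⟨-(r⁻¹ * s), ?_⟩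
      have h1 : r • f₀ = -(s • e₀) := by
        rw [add_comm] at hsr
        rwa [add_eq_zero_iff_eq_neg] at hsr
      calc -(r⁻¹ * s) • e₀ = r⁻¹ • (-(s • e₀)) := by rw [smul_neg, smul_smul, neg_smul]
        _ = r⁻¹ • (r • f₀) := by rw [h1]
        _ = f₀ := by rw [smul_smul, inv_mul_cancel₀ hr, one_smul]
  let b := basisOfLinearIndependentOfCardEqFinrank hindef (by rw [Fintype.card_fin, hdim])
  have hb : ⇑b = ![e₀, f₀] := coe_basisOfLinearIndependentOfCardEqFinrank hindef _
  have hb0 : b 0 = e₀ := by rw [hb]; rfl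
  have hb1 : b 1 = f₀ := by rw [hb]; rfl
  have expand : ∀ v : V, b.repr v 0 • e₀ + b.repr v 1 • f₀ = v := by
    intro v
    have h := b.sum_repr v
    rw [Fin.sum_univ_two, hb0, hb1] at h
    exact h
  let μ0 : V →ₗ[ZMod p] ZMod p := b.coord 0
  let μ : V →ₗ[ZMod p] ZMod p := b.coord 1
  have hμe : μ e₀ = 0 := by
    have h : μ (b 0) = 0 := by
      simp [μ, Module.Basis.coord_apply, Module.Basis.repr_self]
    rwa [hb0] at h
  have hμf : μ f₀ = 1 := by
    have h : μ (b 1) = 1 := by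
      simp [μ, Module.Basis.coord_apply, Module.Basis.repr_self]
    rwa [hb1] at h
  have hμ0e : μ0 e₀ = 1 := by
    have h : μ0 (b 0) = 1 := by
      simp [μ0, Module.Basis.coord_apply, Module.Basis.repr_self]
    rwa [hb0] at h
  have hμ0f : μ0 f₀ = 0 := by
    have h : μ0 (b 1) = 0 := by
      simp [μ0, Module.Basis.coord_apply, Module.Basis.repr_self]
    rwa [hb1] at h
  have uniq : ∀ x y x' y' : ZMod p,
      x • e₀ + y • f₀ = x' • e₀ + y' • f₀ → x = x' ∧ y = y' := by
    intro x y x' y' h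
    have h2 : (x - x') • e₀ + (y - y') • f₀ =
        (x • e₀ + y • f₀) - (x' • e₀ + y' • f₀) := by module
    rw [h, sub_self] at h2
    obtain ⟨hx, hy⟩ := hindef.eq_zero_of_pair h2
    exact ⟨sub_eq_zero.mp hx, sub_eq_zero.mp hy⟩
  have hχ : ∀ g : G, ρ g e₀ = μ0 (ρ g e₀) • e₀ := by
    intro g
    have h1 : ρ g e₀ ∈ Submodule.span (ZMod p) {e₀} := by
      rw [← hPspan]
      exact hPinv g e₀ he0P
    obtain ⟨a, ha⟩ := Submodule.mem_span_singleton.mp h1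
    rw [← ha, map_smul, hμ0e, smul_eq_mul, mul_one]
  set χ : G → ZMod p := fun g => μ0 (ρ g e₀) with hχdef
  set d : G → ZMod p := fun g => μ (ρ g f₀) with hddef
  set β : G → ZMod p := fun g => μ0 (ρ g f₀) with hβdef
  have hdf : ∀ g : G, ρ g f₀ = β g • e₀ + d g • f₀ := fun g => (expand _).symm
  have hχm : ∀ g h : G, χ (g * h) = χ g * χ h := by
    intro g h
    apply canc e₀ _ _ he0
    have h1 : ρ (g * h) e₀ = ρ g (ρ h e₀) := by rw [map_mul]; rfl
    calc χ (g * h) • e₀ = ρ (g * h) e₀ := (hχ _).symm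
      _ = ρ g (ρ h e₀) := h1
      _ = ρ g (χ h • e₀) := by rw [← hχ h]
      _ = χ h • ρ g e₀ := by rw [map_smul]
      _ = χ h • (χ g • e₀) := by rw [← hχ g]
      _ = (χ g * χ h) • e₀ := by rw [smul_smul, mul_comm]
  have hgh : ∀ g h : G, ρ (g * h) f₀ = (β h * χ g + d h * β g) • e₀ + (d h * d g) • f₀ := by
    intro g h
    have h2 : ρ (g * h) f₀ = ρ g (ρ h f₀) := by rw [map_mul]; rfl
    rw [h2, hdf h, map_add, map_smul, map_smul, hdf g, hχ g]
    rw [smul_smul, smul_add, smul_smul, smul_smul]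
    module
  have hdm : ∀ g h : G, d (g * h) = d g * d h := by
    intro g h
    have h3 := hdf (g * h)
    have h4 := uniq _ _ _ _ (h3.symm.trans (hgh g h))
    rw [h4.2]
    ring
  have hχ1 : χ 1 = 1 := by
    apply canc e₀ _ _ he0
    have h1 : ρ (1 : G) e₀ = e₀ := by rw [map_one, Module.End.one_apply]
    rw [← hχ 1, h1, one_smul]
  have hd1 : d 1 = 1 := by
    show μ (ρ (1 : G) f₀) = 1
    rw [map_one, Module.End.one_apply, hμf]
  have hχc : χ c = 1 := by
    show μ0 (ρ c e₀) = 1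
    rw [hce, hμ0e]
  have hdc : d c = 1 := by
    have h1 : d c = d rr * d t * d rr⁻¹ * d t⁻¹ := by rw [hcom, hdm, hdm, hdm]
    have h2 : d rr * d rr⁻¹ = 1 := by rw [← hdm, mul_inv_cancel, hd1]
    have h3 : d t * d t⁻¹ = 1 := by rw [← hdm, mul_inv_cancel, hd1]
    calc d c = d rr * d t * d rr⁻¹ * d t⁻¹ := h1
      _ = (d rr * d rr⁻¹) * (d t * d t⁻¹) := by ring
      _ = 1 := by rw [h2, h3, one_mul]
  have hev : ∀ (L : V →ₗ[ZMod p] V) (ν : V →ₗ[ZMod p] ZMod p) (v : V),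
      ν (L v) = b.repr v 0 * ν (L e₀) + b.repr v 1 * ν (L f₀) := by
    intro L ν v
    conv_lhs => rw [← expand v]
    rw [map_add, map_smul, map_smul, map_add, map_smul, map_smul, smul_eq_mul, smul_eq_mul]
  have hμv : ∀ v : V, μ v = b.repr v 1 := by
    intro v
    conv_lhs => rw [← expand v]
    rw [map_add, map_smul, map_smul, hμe, hμf, smul_eq_mul, smul_eq_mul, mul_zero, mul_one,
      zero_add]
  have hμc : ∀ v : V, μ (ρ c v) = μ v := by
    intro v
    rw [hev (ρ c) μ v, hce, hμe]
    have h1 : μ (ρ c f₀) = d c := rfl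
    rw [h1, hdc, mul_zero, mul_one, zero_add, hμv]
  set lam : ZMod p := χ t with hlamdef
  set tau : ZMod p := d t with htaudef
  have hχt : ρ t e₀ = lam • e₀ := hχ t
  have hlam2 : lam * lam = 1 := by
    have h1 := hχm t t
    rw [ht2, hχ1] at h1
    exact h1.symm
  have htau2 : tau * tau = 1 := by
    have h1 := hdm t t
    rw [ht2, hd1] at h1
    exact h1.symm
  have hμt : ∀ v : V, μ (ρ t v) = tau * μ v := by
    intro v
    rw [hev (ρ t) μ v, hχt]
    rw [map_smul, hμe, smul_eq_mul, mul_zero, mul_zero, zero_add]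
    have h1 : μ (ρ t f₀) = tau := rfl
    rw [h1, hμv, mul_comm]
  have conjApp : ∀ (g : G) (ψ : V →ₗ[ZMod p] V), ρ.conjEnd g ψ = ρ g * ψ * ρ g⁻¹ :=
    fun g ψ => rfl
  have hcc2 : ∀ x : V, ρ (c * c) x = ρ c (ρ c x) := by
    intro x
    rw [map_mul]
    rfl
  rcases mul_self_eq_one_iff.mp hlam2 with hlam | hlam
  · -- Subcase A : lam = 1, the common factor is V/U ≅ Hom(V/U, U)
    have hte : ρ t e₀ = e₀ := by rw [hχt, hlam, one_smul]
    let φ₀ : V →ₗ[ZMod p] V := μ.smulRight e₀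
    have φ₀app : ∀ x, φ₀ x = μ x • e₀ := fun x => rfl
    let Θ : V →ₗ[ZMod p] (V →ₗ[ZMod p] V) := μ.smulRight φ₀
    have Θapp : ∀ v, Θ v = μ v • φ₀ := fun v => rfl
    have hEc : ∀ v, Θ (ρ c v) = ρ.conjEnd c (Θ v) := by
      intro v
      rw [Θapp, Θapp, conjApp, hμc v, hcinv, mul_smul_comm, smul_mul_assoc]
      congr 1
      apply LinearMap.ext
      intro x
      show φ₀ x = ρ c (φ₀ (ρ (c * c) x))
      rw [φ₀app, φ₀app (ρ (c * c) x), map_smul, hce]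
      congr 1
      rw [hcc2, hμc, hμc]
    have hEt : ∀ v, Θ (ρ t v) = ρ.conjEnd t (Θ v) := by
      intro v
      rw [Θapp, Θapp, conjApp, hμt v, htinv, mul_smul_comm, smul_mul_assoc]
      have key : ρ t * φ₀ * ρ t = tau • φ₀ := by
        apply LinearMap.ext
        intro x
        show ρ t (φ₀ (ρ t x)) = (tau • φ₀) x
        rw [φ₀app, map_smul, hte, hμt, LinearMap.smul_apply, φ₀app, smul_smul]
      rw [key, smul_smul, mul_comm]
    have hequiv : ∀ (g : G) (v : V), Θ (ρ g v) = ρ.conjEnd g (Θ v) := by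
      rw [hcdef] at hEc
      rw [htdef] at hEt
      exact equivar_ext e ρ ρ.conjEnd Θ hEc hEt
    let Θ' := toLinA ρ ρ.conjEnd Θ hequiv
    have hφ0 : φ₀ ≠ 0 := by
      intro h
      have h2 := congrArg (fun (F : V →ₗ[ZMod p] V) => F f₀) h
      simp only [LinearMap.zero_apply] at h2
      rw [φ₀app, hμf, one_smul] at h2
      exact he0 h2
    have hker : ∀ x : ρ.asModule, x ∈ LinearMap.ker Θ' ↔ μ (x : V) = 0 := by
      intro x
      rw [LinearMap.mem_ker]
      constructor
      · intro h
        have h1 : μ (x : V) • φ₀ = 0 := by rw [← Θapp (x : V)]; exact h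
        rcases smul_eq_zero.mp h1 with h2 | h2
        · exact h2
        · exact absurd h2 hφ0
      · intro h
        show Θ (x : V) = 0
        rw [Θapp (x : V), h, zero_smul]
    have hsimpleQ : IsSimpleModule (MonoidAlgebra (ZMod p) G)
        (ρ.asModule ⧸ LinearMap.ker Θ') := by
      apply span1 (k := ZMod p)
        ((Submodule.Quotient.mk f₀ : ρ.asModule ⧸ LinearMap.ker Θ'))
      · intro h
        replace h := (Submodule.Quotient.mk_eq_zero _).mp h
        rw [hker f₀] at h
        rw [hμf] at h
        exact one_ne_zero h
      · intro y
        obtain ⟨v, rfl⟩ := Submodule.Quotient.mk_surjective _ y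
        refine ⟨μ (v : V), ?_⟩
        rw [← Submodule.Quotient.mk_smul (p := LinearMap.ker Θ') (μ (v : V)) (f₀ : ρ.asModule)]
        rw [Submodule.Quotient.eq]
        rw [hker]
        show μ ((show V from v) - μ (show V from v) • f₀) = 0
        rw [map_sub, map_smul, hμf, smul_eq_mul, mul_one, sub_self]
    have hmapeq : (Submodule.comap (⊤ : Submodule (MonoidAlgebra (ZMod p) G)
        ρ.asModule).subtype (LinearMap.ker Θ')).map
        (Submodule.topEquiv :
          (⊤ : Submodule (MonoidAlgebra (ZMod p) G) ρ.asModule) ≃ₗ[MonoidAlgebra (ZMod p) G]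
            ρ.asModule).toLinearMap = LinearMap.ker Θ' := by
      ext x
      constructor
      · rintro ⟨y, hy, rfl⟩
        exact hy
      · intro hx
        exact ⟨⟨x, trivial⟩, hx, rfl⟩
    have E2 := Submodule.Quotient.equiv _ (LinearMap.ker Θ') Submodule.topEquiv hmapeq
    haveI := hsimpleQ
    have E3 := Θ'.quotKerEquivRange
    have E4 := (Submodule.quotEquivOfEqBot (R := MonoidAlgebra (ZMod p) G) (M := (LinearMap.range Θ'))
          (⊥ : Submodule (MonoidAlgebra (ZMod p) G) (LinearMap.range Θ')) rfl).symm
    have E5 := E2.trans (E3.trans E4)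
    have S1 : IsSimpleModule (MonoidAlgebra (ZMod p) G) _ := IsSimpleModule.congr E2
    refine ⟨⊤, Submodule.comap (⊤ : Submodule (MonoidAlgebra (ZMod p) G) ρ.asModule).subtype
        (LinearMap.ker Θ'), LinearMap.range Θ', ⊥, S1, ?_⟩
    exact ⟨E5⟩
  rcases mul_self_eq_one_iff.mp htau2 with htau | htau
  · -- Subcase B : tau = 1, the common factor is U ≅ End(V)/E₃
    let Ξ : (V →ₗ[ZMod p] V) →ₗ[ZMod p] V :=
      { toFun := fun φ => μ (φ e₀) • e₀
        map_add' := by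
          intro φ ψ
          show μ ((φ + ψ) e₀) • e₀ = μ (φ e₀) • e₀ + μ (ψ e₀) • e₀
          rw [LinearMap.add_apply, map_add, add_smul]
        map_smul' := by
          intro a φ
          show μ ((a • φ) e₀) • e₀ = a • (μ (φ e₀) • e₀)
          rw [LinearMap.smul_apply, map_smul, smul_eq_mul, mul_smul] }
    have Ξapp : ∀ φ : V →ₗ[ZMod p] V, Ξ φ = μ (φ e₀) • e₀ := fun _ => rfl
    have hEc : ∀ φ, Ξ (ρ.conjEnd c φ) = ρ c (Ξ φ) := by
      intro φ
      rw [Ξapp, Ξapp, conjApp, hcinv]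
      have h1 : (ρ c * φ * ρ (c * c)) e₀ = ρ c (φ (ρ (c * c) e₀)) := rfl
      rw [h1, hcc2, hce, hce, hμc, map_smul, hce]
    have hEt : ∀ φ, Ξ (ρ.conjEnd t φ) = ρ t (Ξ φ) := by
      intro φ
      rw [Ξapp, Ξapp, conjApp, htinv]
      have h1 : (ρ t * φ * ρ t) e₀ = ρ t (φ (ρ t e₀)) := rfl
      rw [h1, hχt, map_smul, map_smul, map_smul, smul_eq_mul, hμt, htau, one_mul,
        map_smul, hχt, smul_smul, mul_comm]
    have hequivX : ∀ (g : G) (φ : V →ₗ[ZMod p] V), Ξ (ρ.conjEnd g φ) = ρ g (Ξ φ) := by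
      rw [hcdef] at hEc
      rw [htdef] at hEt
      exact equivar_ext e ρ.conjEnd ρ Ξ hEc hEt
    let Ξ' := toLinA ρ.conjEnd ρ Ξ hequivX
    let UA : Submodule (MonoidAlgebra (ZMod p) G) ρ.asModule := mkSub ρ P hPinv
    have he0UA : (e₀ : ρ.asModule) ∈ UA := he0P
    have hrange : LinearMap.range Ξ' = UA := by
      apply le_antisymm
      · rintro x ⟨φ, rfl⟩
        show Ξ φ ∈ P
        rw [Ξapp φ]
        exact P.smul_mem _ he0P
      · intro x hx
        have hx2 : (show V from x) ∈ Submodule.span (ZMod p) {e₀} := by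
          rw [← hPspan]; exact hx
        obtain ⟨a, ha⟩ := Submodule.mem_span_singleton.mp hx2
        refine ⟨a • (μ0.smulRight f₀ : V →ₗ[ZMod p] V), ?_⟩
        show Ξ (a • μ0.smulRight f₀) = x
        rw [map_smul]
        have h2 : Ξ (μ0.smulRight f₀) = e₀ := by
          rw [Ξapp, LinearMap.smulRight_apply, hμ0e, one_smul, hμf, one_smul]
        rw [h2]
        exact ha
    haveI hsimpleU : IsSimpleModule (MonoidAlgebra (ZMod p) G) UA := by
      apply span1 (k := ZMod p) (⟨e₀, he0UA⟩ : UA)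
      · intro h
        apply he0
        exact congrArg Subtype.val h
      · intro y
        have hy2 : (show V from (y : ρ.asModule)) ∈ Submodule.span (ZMod p) {e₀} := by
          rw [← hPspan]; exact y.2
        obtain ⟨a, ha⟩ := Submodule.mem_span_singleton.mp hy2
        refine ⟨a, ?_⟩
        apply Subtype.ext
        rw [Submodule.coe_smul_of_tower]
        exact ha.symm
    have hmapeqB : (Submodule.comap (⊤ : Submodule (MonoidAlgebra (ZMod p) G)
        ρ.conjEnd.asModule).subtype (LinearMap.ker Ξ')).map
        (Submodule.topEquiv :
          (⊤ : Submodule (MonoidAlgebra (ZMod p) G) ρ.conjEnd.asModule)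
            ≃ₗ[MonoidAlgebra (ZMod p) G] ρ.conjEnd.asModule).toLinearMap = LinearMap.ker Ξ' := by
      ext x
      constructor
      · rintro ⟨y, hy, rfl⟩
        exact hy
      · intro hx
        exact ⟨⟨x, trivial⟩, hx, rfl⟩
    have E2 := Submodule.Quotient.equiv _ (LinearMap.ker Ξ') Submodule.topEquiv hmapeqB
    have E0 := Submodule.quotEquivOfEqBot (R := MonoidAlgebra (ZMod p) G) (M := UA)
      (⊥ : Submodule (MonoidAlgebra (ZMod p) G) UA) rfl
    have S1 : IsSimpleModule (MonoidAlgebra (ZMod p) G) _ := IsSimpleModule.congr E0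
    have E5 := E0.trans ((LinearEquiv.ofEq _ _ hrange.symm).trans
      (Ξ'.quotKerEquivRange.symm.trans E2.symm))
    refine ⟨UA, ⊥, ⊤, Submodule.comap (⊤ : Submodule (MonoidAlgebra (ZMod p) G)
        ρ.conjEnd.asModule).subtype (LinearMap.ker Ξ'), S1, ?_⟩
    exact ⟨E5⟩
  · -- lam = tau = -1 : contradiction, the group would be abelian
    exfalso
    let H : Subgroup G :=
      { carrier := {g | χ g = d g}
        one_mem' := by
          show χ 1 = d 1
          rw [hχ1, hd1]
        mul_mem' := by
          intro a b ha hb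
          show χ (a * b) = d (a * b)
          have ha' : χ a = d a := ha
          have hb' : χ b = d b := hb
          rw [hχm, hdm, ha', hb']
        inv_mem' := by
          intro a ha
          show χ a⁻¹ = d a⁻¹
          have ha' : χ a = d a := ha
          have h1 : χ a * χ a⁻¹ = 1 := by rw [← hχm, mul_inv_cancel, hχ1]
          have h2 : d a * d a⁻¹ = 1 := by rw [← hdm, mul_inv_cancel, hd1]
          have hda : d a ≠ 0 := by
            intro h
            rw [h, zero_mul] at h2
            exact one_ne_zero h2.symm
          apply mul_left_cancel₀ hda
          rw [h2, ← ha', h1] }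
    have hallH : ∀ g : G, χ g = d g := by
      intro g
      have hcH : e.symm c₀ ∈ H := by
        rw [← hcdef]
        show χ c = d c
        rw [hχc, hdc]
      have htH : e.symm t₀ ∈ H := by
        rw [← htdef]
        show χ t = d t
        rw [← hlamdef, ← htaudef, hlam, htau]
      exact mem_of_gen e H hcH htH g
    have hcomm : ∀ g h : G, ρ (g * h) = ρ (h * g) := by
      intro g h
      apply b.ext
      intro i
      fin_cases i
      · show ρ (g * h) (b 0) = ρ (h * g) (b 0)
        rw [hb0, hχ (g * h), hχ (h * g)]
        have h1 : μ0 (ρ (g * h) e₀) = χ g * χ h := hχm g h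
        have h2 : μ0 (ρ (h * g) e₀) = χ h * χ g := hχm h g
        rw [h1, h2, mul_comm]
      · show ρ (g * h) (b 1) = ρ (h * g) (b 1)
        rw [hb1, hgh g h, hgh h g, hallH g, hallH h]
        rw [show β h * d g + d h * β g = β g * d h + d g * β h by ring,
          show d h * d g = d g * d h by ring]
    exact hct (rinj _ _ (hcomm c t))
end Case2

end S3Aux

/-- Let `p` be a prime, `V` a `2`-dimensional vector space over `𝔽_p`, and
`G ⊆ GL(V)` a subgroup isomorphic, as an abstract group, to the symmetric group `S₃`.  Then
some simple `𝔽_p[G]`-module is a common irreducible factor of `V` and `End(V)` (the latter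
with the conjugation action). -/
theorem hasCommonIrreducibleFactor_of_S3 (p : ℕ) [Fact p.Prime]
    (V : Type) [AddCommGroup V] [Module (ZMod p) V]
    (hdim : Module.finrank (ZMod p) V = 2)
    (G : Subgroup (V ≃ₗ[ZMod p] V)) (hG : Nonempty (G ≃* Equiv.Perm (Fin 3))) :
    HasCommonIrreducibleFactor (MonoidAlgebra (ZMod p) G)
      (tautRep p V G).asModule ((tautRep p V G).conjEnd).asModule := by
  obtain ⟨e⟩ := hG
  by_cases hex : ∃ v : V, v ≠ 0 ∧ tautRep p V G (e.symm S3Aux.c₀) v = v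
  · obtain ⟨e₀, he0, hce⟩ := hex
    exact S3Aux.case2 p V hdim G e e₀ he0 hce
  · push_neg at hex
    apply S3Aux.case1 p V hdim G e
    intro v hv
    by_contra h0
    exact hex v h0 hv
end
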